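/- Every strictly decreasing element of PL(ℝ) can be written as a composite of three involutions belonging to PL(ℝ), and every element of PL(ℝ) can be written as a composite of four involutions belonging to PL(ℝ). (In other words, PL⁻(ℝ) ⊆ I₃(PL(ℝ)) and PL(ℝ) = I₄(PL(ℝ)).) -/

import Mathlib

/-- `f` is a homeomorphism of `ℝ`: a bijection of `ℝ` that is continuous in both directions. -/
def IsHomeo (f : Equiv.Perm ℝ) : Prop := Continuous f ∧ Continuous f.symm

/-- `f` is locally affine at `x`: it agrees with an affine map on a neighbourhood of `x`. -/
def IsLocallyAffineAt (f : ℝ → ℝ) (x : ℝ) : Prop :=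
  ∃ a b : ℝ, ∀ᶠ y in nhds x, f y = a * y + b

/-- Membership in PLF(ℝ): a homeomorphism of `ℝ` that is locally affine at all but
finitely many points. -/
def InPLF (f : Equiv.Perm ℝ) : Prop :=
  IsHomeo f ∧ {x : ℝ | ¬ IsLocallyAffineAt (⇑f) x}.Finite

/-- Membership in PL(ℝ): a homeomorphism of `ℝ` whose set of points of non-local-affinity
has no accumulation point in `ℝ`. -/
def InPL (f : Equiv.Perm ℝ) : Prop :=
  IsHomeo f ∧ ∀ x : ℝ, ¬ AccPt x (Filter.principal {y : ℝ | ¬ IsLocallyAffineAt (⇑f) y})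

open Filter Set

/-- nonaffinity set -/
def NA (f : ℝ → ℝ) : Set ℝ := {x | ¬ IsLocallyAffineAt f x}

lemma notAcc_iff {x : ℝ} {C : Set ℝ} :
    (¬ AccPt x (Filter.principal C)) ↔ ∃ U ∈ nhds x, ∀ y ∈ U ∩ C, y = x := by
  rw [accPt_iff_nhds]
  push_neg
  constructor
  · rintro ⟨U, hU, h⟩
    refine ⟨U, hU, fun y hy => ?_⟩
    by_contra hne
    exact hne (h y hy)
  · rintro ⟨U, hU, h⟩
    exact ⟨U, hU, fun y hy => h y hy⟩

lemma ila_congr {f g : ℝ → ℝ} {x : ℝ} (h : ∀ᶠ y in nhds x, f y = g y)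
    (hg : IsLocallyAffineAt g x) : IsLocallyAffineAt f x := by
  obtain ⟨a, b, hab⟩ := hg
  exact ⟨a, b, by filter_upwards [h, hab] with y h1 h2; rw [h1, h2]⟩

lemma ila_affine (a b x : ℝ) : IsLocallyAffineAt (fun y => a * y + b) x :=
  ⟨a, b, Filter.Eventually.of_forall fun _ => rfl⟩

lemma notAcc_union {x : ℝ} {C D : Set ℝ}
    (hC : ¬ AccPt x (Filter.principal C)) (hD : ¬ AccPt x (Filter.principal D)) :
    ¬ AccPt x (Filter.principal (C ∪ D)) := by
  rw [notAcc_iff] at *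
  obtain ⟨U, hU, hUs⟩ := hC
  obtain ⟨V, hV, hVs⟩ := hD
  refine ⟨U ∩ V, Filter.inter_mem hU hV, ?_⟩
  rintro y ⟨⟨hyU, hyV⟩, hy | hy⟩
  · exact hUs y ⟨hyU, hy⟩
  · exact hVs y ⟨hyV, hy⟩

/-- pull back a no-accumulation set through a continuous injective map -/
lemma notAcc_preimage {h : ℝ → ℝ} {x : ℝ} {C : Set ℝ}
    (hc : Continuous h) (hinj : Function.Injective h)
    (hC : ¬ AccPt (h x) (Filter.principal C)) :
    ¬ AccPt x (Filter.principal (h ⁻¹' C)) := by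
  rw [notAcc_iff] at *
  obtain ⟨U, hU, hUs⟩ := hC
  refine ⟨h ⁻¹' U, hc.continuousAt.preimage_mem_nhds hU, ?_⟩
  rintro y ⟨hyU, hyC⟩
  exact hinj (hUs (h y) ⟨hyU, hyC⟩)

/-- the no-accumulation condition, for plain functions -/
def PLM (f : ℝ → ℝ) : Prop := ∀ x : ℝ, ¬ AccPt x (Filter.principal (NA f))

lemma inPL_iff {f : Equiv.Perm ℝ} : InPL f ↔ IsHomeo f ∧ PLM ⇑f := Iff.rfl

lemma plm_affine (a b : ℝ) : PLM (fun y => a * y + b) := by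
  intro x
  rw [notAcc_iff]
  refine ⟨univ, Filter.univ_mem, ?_⟩
  rintro y ⟨-, hy⟩
  exact absurd (ila_affine a b y) hy

lemma na_comp {f g : ℝ → ℝ} (hg : Continuous g) :
    NA (f ∘ g) ⊆ NA g ∪ g ⁻¹' (NA f) := by
  intro y hy
  by_contra hmem
  simp only [mem_union, not_or, mem_preimage] at hmem
  obtain ⟨h1, h2⟩ := hmem
  simp only [NA, mem_setOf_eq, not_not] at h1 h2
  obtain ⟨a, b, hab⟩ := h1
  obtain ⟨c, d, hcd⟩ := h2
  refine hy ⟨c * a, c * b + d, ?_⟩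
  filter_upwards [hab, (hg.tendsto y).eventually hcd] with z h1 h2
  rw [Function.comp_apply, h2, h1]; ring

lemma plm_comp {f g : ℝ → ℝ} (hf : PLM f) (hg : PLM g)
    (hgc : Continuous g) (hginj : Function.Injective g) : PLM (f ∘ g) := by
  intro x
  rw [notAcc_iff]
  have h1 := hg x
  have h2 := notAcc_preimage hgc hginj (hf (g x))
  have h3 := notAcc_union h1 h2
  rw [notAcc_iff] at h3
  obtain ⟨U, hU, hUs⟩ := h3
  exact ⟨U, hU, fun y hy => hUs y ⟨hy.1, na_comp hgc hy.2⟩⟩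

lemma inPL_one : InPL 1 := by
  constructor
  · exact ⟨continuous_id, continuous_id⟩
  · intro x
    rw [show {y : ℝ | ¬ IsLocallyAffineAt (⇑(1 : Equiv.Perm ℝ)) y} = NA (fun y => 1 * y + 0) by
      simp [NA, IsLocallyAffineAt]]
    exact plm_affine 1 0 x

lemma inPL_mul {f g : Equiv.Perm ℝ} (hf : InPL f) (hg : InPL g) : InPL (f * g) := by
  constructor
  · exact ⟨hf.1.1.comp hg.1.1, hg.1.2.comp hf.1.2⟩
  · have : ⇑(f * g) = ⇑f ∘ ⇑g := rfl
    rw [show {y : ℝ | ¬ IsLocallyAffineAt (⇑(f * g)) y} = NA (⇑f ∘ ⇑g) by rw [← this]; rfl]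
    exact plm_comp hf.2 hg.2 hg.1.1 g.injective

lemma inPL_inv {f : Equiv.Perm ℝ} (hf : InPL f) : InPL f⁻¹ := by
  obtain ⟨⟨hc, hcs⟩, hpl⟩ := hf
  have hinv : ⇑f⁻¹ = ⇑f.symm := rfl
  constructor
  · exact ⟨by rw [hinv]; exact hcs, by exact hc⟩
  · intro x
    -- NA f⁻¹ ⊆ (⇑f⁻¹) ⁻¹' (NA ⇑f)
    have hsub : {y : ℝ | ¬ IsLocallyAffineAt (⇑f⁻¹) y} ⊆ (⇑f⁻¹) ⁻¹' (NA ⇑f) := by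
      intro y hy
      by_contra hmem
      simp only [mem_preimage, NA, mem_setOf_eq, not_not] at hmem
      obtain ⟨a, b, hab⟩ := hmem
      -- a ≠ 0 since f injective
      have ha : a ≠ 0 := by
        intro h0
        subst h0
        obtain ⟨U, hUp, hUo, hUm⟩ := eventually_nhds_iff.1 hab
        obtain ⟨ε, hε, hball⟩ := Metric.isOpen_iff.1 hUo _ hUm
        have h1 : f (f⁻¹ y) = 0 * (f⁻¹ y) + b := hUp _ (hball (Metric.mem_ball_self hε))
        have h2 : f (f⁻¹ y + ε/2) = 0 * (f⁻¹ y + ε/2) + b := by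
          refine hUp _ (hball ?_)
          rw [Metric.mem_ball, Real.dist_eq]
          rw [show f⁻¹ y + ε/2 - f⁻¹ y = ε/2 by ring, abs_of_pos (by linarith)]
          linarith
        have h3 : f (f⁻¹ y) = f (f⁻¹ y + ε/2) := by rw [h1, h2]; ring_nf
        have := f.injective h3
        linarith
      refine hy ⟨1/a, -b/a, ?_⟩
      have hcont : Filter.Tendsto (⇑f⁻¹) (nhds y) (nhds (f⁻¹ y)) := by
        rw [hinv]; exact hcs.tendsto y
      filter_upwards [hcont.eventually hab] with z hz
      have hz2 : z = a * (f⁻¹ z) + b := by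
        conv_lhs => rw [← f.apply_symm_apply z]
        exact hz
      set u := (⇑f⁻¹) z with hu
      field_simp
      linarith [hz2]
    rw [notAcc_iff]
    have hpre := notAcc_preimage (h := ⇑f⁻¹) (by rw [hinv]; exact hcs) f⁻¹.injective
      (hpl (f⁻¹ x))
    rw [notAcc_iff] at hpre
    obtain ⟨U, hU, hUs⟩ := hpre
    exact ⟨U, hU, fun y hy => hUs y ⟨hy.1, hsub hy.2⟩⟩

/-- PL(ℝ) as a subgroup, to get closure under zpow for free -/
def PLsub : Subgroup (Equiv.Perm ℝ) where
  carrier := {f | InPL f}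
  one_mem' := inPL_one
  mul_mem' := fun hf hg => inPL_mul hf hg
  inv_mem' := fun hf => inPL_inv hf

lemma inPL_zpow {f : Equiv.Perm ℝ} (hf : InPL f) (n : ℤ) : InPL (f ^ n) :=
  zpow_mem (show f ∈ PLsub from hf) n

/-- affine permutation -/
noncomputable def affPerm (a b : ℝ) (ha : a ≠ 0) : Equiv.Perm ℝ where
  toFun := fun x => a * x + b
  invFun := fun y => (y - b) / a
  left_inv := fun x => by field_simp; ring
  right_inv := fun y => by field_simp; ring

lemma affPerm_apply (a b : ℝ) (ha : a ≠ 0) (x : ℝ) : affPerm a b ha x = a * x + b := rfl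

lemma inPL_affPerm (a b : ℝ) (ha : a ≠ 0) : InPL (affPerm a b ha) := by
  constructor
  · constructor
    · show Continuous fun x => a * x + b
      fun_prop
    · show Continuous fun y => (y - b) / a
      fun_prop
  · intro x
    exact plm_affine a b x

/-- one-piece locality lemma -/
lemma piece_one {f h : ℝ → ℝ} {x : ℝ} {U : Set ℝ} (hUo : IsOpen U) (hx : x ∈ U)
    (heq : ∀ y ∈ U, f y = h y) (hh : PLM h) : ¬ AccPt x (Filter.principal (NA f)) := by
  obtain ⟨V, hV, hVs⟩ := notAcc_iff.1 (hh x)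
  rw [notAcc_iff]
  refine ⟨U ∩ V, Filter.inter_mem (hUo.mem_nhds hx) hV, ?_⟩
  rintro y ⟨⟨hyU, hyV⟩, hyNA⟩
  refine hVs y ⟨hyV, ?_⟩
  intro hILA
  exact hyNA (ila_congr (eventually_nhds_iff.2 ⟨U, heq, hUo, hyU⟩) hILA)

/-- two-piece locality lemma -/
lemma piece_two {f h₁ h₂ : ℝ → ℝ} {a x b : ℝ} (hax : a < x) (hxb : x < b)
    (heq1 : ∀ y, a < y → y < x → f y = h₁ y) (heq2 : ∀ y, x < y → y < b → f y = h₂ y)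
    (hh1 : PLM h₁) (hh2 : PLM h₂) : ¬ AccPt x (Filter.principal (NA f)) := by
  obtain ⟨V₁, hV₁, hV₁s⟩ := notAcc_iff.1 (hh1 x)
  obtain ⟨V₂, hV₂, hV₂s⟩ := notAcc_iff.1 (hh2 x)
  rw [notAcc_iff]
  refine ⟨Ioo a b ∩ (V₁ ∩ V₂),
    Filter.inter_mem (Ioo_mem_nhds hax hxb) (Filter.inter_mem hV₁ hV₂), ?_⟩
  rintro y ⟨⟨⟨hya, hyb⟩, hyV₁, hyV₂⟩, hyNA⟩
  by_contra hne
  rcases lt_trichotomy y x with hlt | heqq | hgt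
  · refine hne (hV₁s y ⟨hyV₁, ?_⟩)
    intro hILA
    exact hyNA (ila_congr (eventually_nhds_iff.2
      ⟨Ioo a x, fun z hz => heq1 z hz.1 hz.2, isOpen_Ioo, ⟨hya, hlt⟩⟩) hILA)
  · exact hne heqq
  · refine hne (hV₂s y ⟨hyV₂, ?_⟩)
    intro hILA
    exact hyNA (ila_congr (eventually_nhds_iff.2
      ⟨Ioo x b, fun z hz => heq2 z hz.1 hz.2, isOpen_Ioo, ⟨hgt, hyb⟩⟩) hILA)

/-- two affine maps agreeing near a point are equal -/
lemma affine_eq_affine {a b a' b' x : ℝ}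
    (h : ∀ᶠ y in nhds x, a * y + b = a' * y + b') : a = a' ∧ b = b' := by
  obtain ⟨U, hUp, hUo, hUm⟩ := eventually_nhds_iff.1 h
  obtain ⟨ε, hε, hball⟩ := Metric.isOpen_iff.1 hUo _ hUm
  have h1 : a * x + b = a' * x + b' := hUp _ (hball (Metric.mem_ball_self hε))
  have h2 : a * (x + ε/2) + b = a' * (x + ε/2) + b' := by
    refine hUp _ (hball ?_)
    rw [Metric.mem_ball, Real.dist_eq, show x + ε/2 - x = ε/2 by ring, abs_of_pos (by linarith)]
    linarith
  have ha : a = a' := by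
    have h3 : a * (ε/2) = a' * (ε/2) := by linarith
    have : a = a' := by
      have hε2 : (ε/2) ≠ 0 := by positivity
      exact mul_right_cancel₀ hε2 h3
    exact this
  exact ⟨ha, by rw [ha] at h1; linarith⟩

/-- locally affine on an open interval implies affine on it -/
lemma affine_of_ila_Ioo {p : ℝ → ℝ} {u v : ℝ}
    (h : ∀ y ∈ Ioo u v, IsLocallyAffineAt p y) (hne : (Ioo u v).Nonempty) :
    ∃ a b : ℝ, ∀ y ∈ Ioo u v, p y = a * y + b := by
  obtain ⟨w, hw⟩ := hne
  obtain ⟨a, b, hab⟩ := h w hw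
  set V₁ : Set ℝ := {y | ∀ᶠ z in nhds y, p z = a * z + b} with hV₁def
  set V₂ : Set ℝ := {y | (∃ a' b', ∀ᶠ z in nhds y, p z = a' * z + b') ∧
      ¬ (∀ᶠ z in nhds y, p z = a * z + b)} with hV₂def
  have hV₁o : IsOpen V₁ := by
    rw [isOpen_iff_mem_nhds]
    intro y hy
    obtain ⟨U, hUp, hUo, hUm⟩ := eventually_nhds_iff.1 hy
    filter_upwards [hUo.mem_nhds hUm] with z hz
    exact eventually_nhds_iff.2 ⟨U, hUp, hUo, hz⟩
  have hV₂o : IsOpen V₂ := by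
    rw [isOpen_iff_mem_nhds]
    rintro y ⟨⟨a', b', hy⟩, hny⟩
    obtain ⟨U, hUp, hUo, hUm⟩ := eventually_nhds_iff.1 hy
    filter_upwards [hUo.mem_nhds hUm] with z hz
    have hz1 : ∀ᶠ w in nhds z, p w = a' * w + b' := eventually_nhds_iff.2 ⟨U, hUp, hUo, hz⟩
    refine ⟨⟨a', b', hz1⟩, ?_⟩
    intro hz2
    have : ∀ᶠ w in nhds z, a * w + b = a' * w + b' := by
      filter_upwards [hz1, hz2] with w h1 h2
      rw [← h1, ← h2]
    obtain ⟨haa, hbb⟩ := affine_eq_affine this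
    exact hny (by rw [haa, hbb]; exact hy)
  have hsub : Ioo u v ⊆ V₁ ∪ V₂ := by
    intro y hy
    obtain ⟨a', b', h'⟩ := h y hy
    by_cases hcase : ∀ᶠ z in nhds y, p z = a * z + b
    · exact Or.inl hcase
    · exact Or.inr ⟨⟨a', b', h'⟩, hcase⟩
  have hpre : IsPreconnected (Ioo u v) := isPreconnected_Ioo
  have hV₂empty : Ioo u v ∩ V₂ = ∅ := by
    by_contra hne2
    have h2ne : (Ioo u v ∩ V₂).Nonempty := nonempty_iff_ne_empty.2 hne2
    have h1ne : (Ioo u v ∩ V₁).Nonempty := ⟨w, hw, hab⟩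
    obtain ⟨z, _, hz1, hz2⟩ := hpre V₁ V₂ hV₁o hV₂o hsub h1ne h2ne
    exact hz2.2 hz1
  refine ⟨a, b, fun y hy => ?_⟩
  have : y ∈ V₁ := by
    rcases hsub hy with h1 | h2
    · exact h1
    · exact absurd (mem_inter hy h2) (by rw [hV₂empty]; exact notMem_empty y)
  exact this.self_of_nhds

lemma strictAnti_symm {d : Equiv.Perm ℝ} (hd : StrictAnti ⇑d) : StrictAnti ⇑d.symm := by
  intro u v huv
  by_contra hle
  push_neg at hle
  rcases eq_or_lt_of_le hle with heq | hlt
  · have h2 := congrArg d heq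
    rw [d.apply_symm_apply, d.apply_symm_apply] at h2
    exact absurd h2 (ne_of_lt huv)
  · have := hd hlt
    rw [d.apply_symm_apply, d.apply_symm_apply] at this
    exact absurd huv (not_lt.2 this.le)

/-- minimum of affine maps is locally affine off one point -/
lemma minAff (a b a' b' : ℝ) :
    ∃ z : ℝ, ∀ y : ℝ, y ≠ z →
      IsLocallyAffineAt (fun w => min (a * w + b) (a' * w + b')) y := by
  by_cases ha : a = a'
  · subst ha
    rcases le_total b b' with hb | hb
    · refine ⟨0, fun y _ => ?_⟩
      have : (fun w => min (a * w + b) (a * w + b')) = fun w => a * w + b := by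
        funext w; exact min_eq_left (by linarith)
      rw [this]; exact ila_affine a b y
    · refine ⟨0, fun y _ => ?_⟩
      have : (fun w => min (a * w + b) (a * w + b')) = fun w => a * w + b' := by
        funext w; exact min_eq_right (by linarith)
      rw [this]; exact ila_affine a b' y
  · refine ⟨(b' - b)/(a - a'), fun y hy => ?_⟩
    have hne : a * y + b ≠ a' * y + b' := by
      intro heq
      apply hy
      have haa : a - a' ≠ 0 := sub_ne_zero.2 ha
      field_simp
      linarith
    rcases lt_or_gt_of_ne hne with hlt | hgt
    · have hopen : IsOpen {w : ℝ | a * w + b < a' * w + b'} :=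
        isOpen_lt (by fun_prop) (by fun_prop)
      refine ila_congr (eventually_nhds_iff.2 ⟨_, fun z hz => min_eq_left (le_of_lt hz),
        hopen, hlt⟩) (ila_affine a b y)
    · have hopen : IsOpen {w : ℝ | a' * w + b' < a * w + b} :=
        isOpen_lt (by fun_prop) (by fun_prop)
      refine ila_congr (eventually_nhds_iff.2 ⟨_, fun z hz => min_eq_right (le_of_lt hz),
        hopen, hgt⟩) (ila_affine a' b' y)

/-- PLM for the pointwise min of two PL functions -/
lemma plm_min {d e : ℝ → ℝ} (hd : PLM d) (he : PLM e) :
    PLM (fun w => min (d w) (e w)) := by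
  intro x
  set m : ℝ → ℝ := fun w => min (d w) (e w) with hm
  obtain ⟨Vd, hVd, hVds⟩ := notAcc_iff.1 (hd x)
  obtain ⟨Ve, hVe, hVes⟩ := notAcc_iff.1 (he x)
  obtain ⟨ε, hε, hball⟩ := Metric.mem_nhds_iff.1 (Filter.inter_mem hVd hVe)
  set u : ℝ := x - ε/2 with hu
  set v : ℝ := x + ε/2 with hv
  have hIoo : Ioo u v ⊆ Vd ∩ Ve := by
    intro y hy
    apply hball
    rw [Metric.mem_ball, Real.dist_eq, abs_lt]
    constructor <;> [skip; skip] <;> · simp only [hu, hv, mem_Ioo] at hy ⊢; linarith [hy.1, hy.2]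
  -- d and e are ILA on the punctured interval
  have hILA : ∀ y ∈ Ioo u v, y ≠ x → (IsLocallyAffineAt d y ∧ IsLocallyAffineAt e y) := by
    intro y hy hyx
    constructor
    · by_contra hna
      exact hyx (hVds y ⟨(hIoo hy).1, hna⟩)
    · by_contra hna
      exact hyx (hVes y ⟨(hIoo hy).2, hna⟩)
  -- affine on each side
  have hux : u < x := by rw [hu]; linarith
  have hxv : x < v := by rw [hv]; linarith
  have hR : ∃ zR : ℝ, ∀ y ∈ Ioo x v, y ≠ zR → IsLocallyAffineAt m y := by
    obtain ⟨a, b, hab⟩ := affine_of_ila_Ioo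
      (fun y hy => (hILA y ⟨lt_trans hux hy.1, hy.2⟩ (ne_of_gt hy.1)).1)
      ⟨(x+v)/2, ⟨by linarith, by linarith⟩⟩
    obtain ⟨a', b', hab'⟩ := affine_of_ila_Ioo
      (fun y hy => (hILA y ⟨lt_trans hux hy.1, hy.2⟩ (ne_of_gt hy.1)).2)
      ⟨(x+v)/2, ⟨by linarith, by linarith⟩⟩
    obtain ⟨z, hz⟩ := minAff a b a' b'
    refine ⟨z, fun y hy hyz => ?_⟩
    refine ila_congr (eventually_nhds_iff.2 ⟨Ioo x v, fun w hw => ?_, isOpen_Ioo, hy⟩) (hz y hyz)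
    simp only [hm]
    rw [hab w hw, hab' w hw]
  have hL : ∃ zL : ℝ, ∀ y ∈ Ioo u x, y ≠ zL → IsLocallyAffineAt m y := by
    obtain ⟨a, b, hab⟩ := affine_of_ila_Ioo
      (fun y hy => (hILA y ⟨hy.1, lt_trans hy.2 hxv⟩ (ne_of_lt hy.2)).1)
      ⟨(u+x)/2, ⟨by linarith, by linarith⟩⟩
    obtain ⟨a', b', hab'⟩ := affine_of_ila_Ioo
      (fun y hy => (hILA y ⟨hy.1, lt_trans hy.2 hxv⟩ (ne_of_lt hy.2)).2)
      ⟨(u+x)/2, ⟨by linarith, by linarith⟩⟩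
    obtain ⟨z, hz⟩ := minAff a b a' b'
    refine ⟨z, fun y hy hyz => ?_⟩
    refine ila_congr (eventually_nhds_iff.2 ⟨Ioo u x, fun w hw => ?_, isOpen_Ioo, hy⟩) (hz y hyz)
    simp only [hm]
    rw [hab w hw, hab' w hw]
  obtain ⟨zR, hzR⟩ := hR
  obtain ⟨zL, hzL⟩ := hL
  rw [notAcc_iff]
  refine ⟨Ioo u v ∩ ({zR, zL} \ {x})ᶜ, ?_, ?_⟩
  · refine Filter.inter_mem (Ioo_mem_nhds hux hxv) ?_
    refine IsOpen.mem_nhds ?_ (by simp)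
    exact (Set.Finite.isClosed (Finite.sdiff (by simp))).isOpen_compl
  · rintro y ⟨⟨hyIoo, hyc⟩, hyNA⟩
    by_contra hyx
    have hynz : y ≠ zR ∧ y ≠ zL := by
      simp only [mem_compl_iff, mem_diff, mem_insert_iff, mem_singleton_iff, not_and, not_not]
        at hyc
      constructor
      · intro h; exact hyx (hyc (Or.inl h))
      · intro h; exact hyx (hyc (Or.inr h))
    rcases lt_or_gt_of_ne hyx with hlt | hgt
    · exact hyNA (hzL y ⟨hyIoo.1, hlt⟩ hynz.2)
    · exact hyNA (hzR y ⟨hgt, hyIoo.2⟩ hynz.1)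

lemma min_inv_min {d : Equiv.Perm ℝ} (hd : StrictAnti ⇑d) (x : ℝ) :
    min (d (min (d x) (d.symm x))) (d.symm (min (d x) (d.symm x))) = x := by
  have hds := strictAnti_symm hd
  rcases le_total (d x) (d.symm x) with hle | hle
  · rw [min_eq_left hle]
    have h1 : d.symm (d x) = x := d.symm_apply_apply x
    have h2 : x ≤ d (d x) := by
      have h3 := hd.antitone hle
      rwa [d.apply_symm_apply] at h3
    rw [h1]
    exact min_eq_right h2
  · rw [min_eq_right hle]
    have h1 : d (d.symm x) = x := d.apply_symm_apply x
    have h2 : x ≤ d.symm (d.symm x) := by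
      have h3 := hds.antitone hle
      rwa [d.symm_apply_apply] at h3
    rw [h1]
    exact min_eq_left h2

/-- the min of a decreasing permutation and its inverse, as an involution -/
noncomputable def minPerm (d : Equiv.Perm ℝ) (hd : StrictAnti ⇑d) : Equiv.Perm ℝ where
  toFun := fun x => min (d x) (d.symm x)
  invFun := fun x => min (d x) (d.symm x)
  left_inv := fun x => min_inv_min hd x
  right_inv := fun x => min_inv_min hd x

lemma minPerm_apply (d : Equiv.Perm ℝ) (hd : StrictAnti ⇑d) (x : ℝ) :
    minPerm d hd x = min (d x) (d.symm x) := rfl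

lemma minPerm_symm_apply (d : Equiv.Perm ℝ) (hd : StrictAnti ⇑d) (x : ℝ) :
    (minPerm d hd).symm x = min (d x) (d.symm x) := rfl

lemma minPerm_sq (d : Equiv.Perm ℝ) (hd : StrictAnti ⇑d) :
    minPerm d hd * minPerm d hd = 1 := by
  apply Equiv.ext
  intro x
  exact min_inv_min hd x

lemma minPerm_strictAnti (d : Equiv.Perm ℝ) (hd : StrictAnti ⇑d) :
    StrictAnti ⇑(minPerm d hd) := by
  intro a b hab
  have h1 := hd hab
  have h2 := strictAnti_symm hd hab
  exact lt_min (lt_of_le_of_lt (min_le_left _ _) h1) (lt_of_le_of_lt (min_le_right _ _) h2)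

lemma minPerm_inPL (d : Equiv.Perm ℝ) (hd : StrictAnti ⇑d) (hdPL : InPL d) :
    InPL (minPerm d hd) := by
  have hcont : Continuous fun x => min (d x) (d.symm x) :=
    Continuous.min hdPL.1.1 hdPL.1.2
  constructor
  · exact ⟨hcont, hcont⟩
  · intro x
    have : {y : ℝ | ¬ IsLocallyAffineAt (⇑(minPerm d hd)) y} =
        NA (fun w => min (d w) (d.symm w)) := rfl
    rw [this]
    have hplmsymm : PLM ⇑d.symm := (inPL_inv hdPL).2
    exact plm_min hdPL.2 hplmsymm x

lemma strictMono_symm {d : Equiv.Perm ℝ} (hd : StrictMono ⇑d) : StrictMono ⇑d.symm := by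
  intro u v huv
  by_contra hle
  push_neg at hle
  rcases eq_or_lt_of_le hle with heq | hlt
  · have h2 := congrArg d heq
    rw [d.apply_symm_apply, d.apply_symm_apply] at h2
    exact absurd h2 (ne_of_gt huv)
  · have h2 := hd hlt
    rw [d.apply_symm_apply, d.apply_symm_apply] at h2
    exact absurd huv (not_lt.2 h2.le)

lemma strictMono_pow {g : Equiv.Perm ℝ} (hg : StrictMono ⇑g) (k : ℕ) :
    StrictMono ⇑(g ^ k) := by
  induction k with
  | zero => simpa using strictMono_id
  | succ k ih =>
    have : (g ^ (k+1) : Equiv.Perm ℝ) = g ^ k * g := by rw [pow_succ]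
    rw [this]
    exact ih.comp hg

lemma strictMono_zpow {g : Equiv.Perm ℝ} (hg : StrictMono ⇑g) (n : ℤ) :
    StrictMono ⇑(g ^ n) := by
  cases n with
  | ofNat k => rw [Int.ofNat_eq_coe, zpow_natCast]; exact strictMono_pow hg k
  | negSucc k =>
    rw [zpow_negSucc]
    have : ⇑((g ^ (k+1))⁻¹ : Equiv.Perm ℝ) = ⇑(g ^ (k+1)).symm := rfl
    rw [this]
    exact strictMono_symm (strictMono_pow hg (k+1))

lemma zpow_apply_zpow (g : Equiv.Perm ℝ) (m n : ℤ) (x : ℝ) :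
    (g ^ m) ((g ^ n) x) = (g ^ (m + n)) x := by
  rw [← Equiv.Perm.mul_apply, ← zpow_add]

/-- a fixed-point-free increasing PL map is a product of two PL involutions -/
lemma decomp_fpf (g : Equiv.Perm ℝ) (hgPL : InPL g) (hg : StrictMono ⇑g)
    (hstep : ∀ x : ℝ, g x ≤ x - 1) :
    ∃ τ₂ τ₃ : Equiv.Perm ℝ, (InPL τ₂ ∧ τ₂ * τ₂ = 1) ∧ (InPL τ₃ ∧ τ₃ * τ₃ = 1) ∧
      g = τ₂ * τ₃ := by
  classical
  set X : ℤ → ℝ := fun n => (g ^ n) 0 with hX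
  have hXsucc : ∀ n : ℤ, X (n + 1) = g (X n) := by
    intro n
    show (g ^ (n+1)) 0 = g ((g ^ n) 0)
    rw [show g ((g ^ n) 0) = (g ^ (1:ℤ)) ((g ^ n) 0) by simp, zpow_apply_zpow]
    ring_nf
  have hXanti : StrictAnti X := by
    apply strictAnti_int_of_succ_lt
    intro n
    rw [hXsucc n]
    have := hstep (X n)
    linarith
  have hXzero : X 0 = 0 := by simp [hX]
  have hXone : X 1 ≤ -1 := by
    have h1 := hstep 0
    rw [show X 1 = g (X 0) from hXsucc 0, hXzero] at *
    linarith [hstep (0:ℝ)]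
  -- bound
  have hXbound : ∀ n : ℤ, ∀ k : ℕ, X (n + k) ≤ X n - k := by
    intro n k
    induction k with
    | zero => simp
    | succ k ih =>
      have h1 : X (n + (k+1:ℕ)) = g (X (n + k)) := by
        rw [← hXsucc]; norm_num; ring_nf
      rw [h1]
      have := hstep (X (n + k))
      push_cast
      push_cast at ih
      linarith
  have hbelow : ∀ y : ℝ, ∃ n : ℤ, X n < y := by
    intro y
    obtain ⟨k, hk⟩ := exists_nat_gt (X 0 - y)
    refine ⟨(k : ℤ), ?_⟩
    have := hXbound 0 k
    simp only [zero_add] at this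
    linarith
  have habove : ∀ y : ℝ, ∃ n : ℤ, y ≤ X n := by
    intro y
    obtain ⟨k, hk⟩ := exists_nat_gt (y - X 0)
    refine ⟨-(k : ℤ), ?_⟩
    have := hXbound (-(k:ℤ)) k
    simp only [neg_add_cancel] at this
    linarith
  -- the index function
  have hex : ∀ y : ℝ, ∃ n : ℤ, (y ≤ X n) ∧ ∀ z : ℤ, y ≤ X z → z ≤ n := by
    intro y
    obtain ⟨n₀, hn₀⟩ := hbelow y
    obtain ⟨n₁, hn₁⟩ := habove y
    obtain ⟨ub, hub1, hub2⟩ := Int.exists_greatest_of_bdd (P := fun n => y ≤ X n)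
      ⟨n₀, fun z hz => by
        by_contra hzn
        push_neg at hzn
        have := hXanti hzn
        linarith⟩ ⟨n₁, hn₁⟩
    exact ⟨ub, hub1, hub2⟩
  choose N hN1 hN2 using hex
  have hN3 : ∀ y : ℝ, X (N y + 1) < y := by
    intro y
    by_contra hle
    push_neg at hle
    have := hN2 y _ hle
    omega
  have hNuniq : ∀ (y : ℝ) (n : ℤ), X (n+1) < y → y ≤ X n → N y = n := by
    intro y n h1 h2
    have ha := hN2 y n h2
    rcases eq_or_lt_of_le ha with heq | hlt
    · exact heq.symm ▸ rfl
    · exfalso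
      have hn1 : n + 1 ≤ N y := by omega
      have := hXanti.antitone hn1
      have := hN1 y
      linarith
  -- the conjugating map
  have hX1neg : X 1 < 0 := by linarith
  set c : ℝ := -1 / X 1 with hc
  have hcpos : 0 < c := by
    rw [hc]
    apply div_pos_of_neg_of_neg <;> linarith
  set φ : ℝ → ℝ := fun y => c * ((g ^ (-(N y))) y) + -(N y : ℝ) with hφ
  -- range of the normalized point
  have hrange : ∀ y : ℝ, X 1 < (g ^ (-(N y))) y ∧ (g ^ (-(N y))) y ≤ 0 := by
    intro y
    have h1 := hN3 y
    have h2 := hN1 y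
    have hm := strictMono_zpow hg (-(N y))
    constructor
    · have := hm h1
      rwa [show (g ^ (-(N y))) (X (N y + 1)) = X 1 by
        show (g ^ (-(N y))) ((g ^ (N y + 1)) 0) = (g ^ (1:ℤ)) 0
        rw [zpow_apply_zpow]; ring_nf] at this
    · have := hm.monotone h2
      rwa [show (g ^ (-(N y))) (X (N y)) = 0 by
        show (g ^ (-(N y))) ((g ^ (N y)) 0) = 0
        rw [zpow_apply_zpow]; simp] at this
  have hφmono : StrictMono φ := by
    intro y y' hyy
    have hNle : N y' ≤ N y := by
      apply hN2
      exact le_trans hyy.le (hN1 y')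
    rcases eq_or_lt_of_le hNle with heq | hlt
    · have hmono := strictMono_zpow hg (-(N y)) hyy
      show c * ((g ^ (-(N y))) y) + -(N y : ℝ) < c * ((g ^ (-(N y'))) y') + -(N y' : ℝ)
      rw [heq]
      nlinarith
    · -- N y' < N y : φ y ≤ -N y ≤ -N y' - 1 < φ y'
      have h1 : φ y ≤ -(N y : ℝ) := by
        have := (hrange y).2
        show c * ((g ^ (-(N y))) y) + -(N y : ℝ) ≤ -(N y : ℝ)
        nlinarith
      have h2 : -1 + -(N y' : ℝ) < φ y' := by
        have h3 := (hrange y').1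
        show -1 + -(N y' : ℝ) < c * ((g ^ (-(N y'))) y') + -(N y' : ℝ)
        have h4 : c * X 1 = -1 := by
          rw [hc]
          exact div_mul_cancel₀ (-1) (ne_of_lt hX1neg)
        nlinarith
      have h5 : (N y' : ℝ) + 1 ≤ (N y : ℝ) := by exact_mod_cast hlt
      linarith
  have hφsurj : Function.Surjective φ := by
    intro z
    set n : ℤ := ⌊-z⌋ with hn
    have hfl1 : (n : ℝ) ≤ -z := Int.floor_le _
    have hfl2 : -z < n + 1 := Int.lt_floor_add_one _
    set s : ℝ := z + n with hs
    have hs1 : -1 < s := by rw [hs]; push_cast; linarith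
    have hs2 : s ≤ 0 := by rw [hs]; push_cast; linarith
    set t : ℝ := s / c with ht
    have hX1c : X 1 = -1 / c := by
      rw [hc]; field_simp
    have ht1 : X 1 < t := by
      rw [hX1c, ht]
      exact div_lt_div_of_pos_right hs1 hcpos
    have ht2 : t ≤ 0 := by
      rw [ht]
      exact div_nonpos_of_nonpos_of_nonneg hs2 hcpos.le
    refine ⟨(g ^ n) t, ?_⟩
    have hNn : N ((g ^ n) t) = n := by
      apply hNuniq
      · have := strictMono_zpow hg n ht1
        rwa [show (g ^ n) (X 1) = X (n + 1) by
          show (g ^ n) ((g ^ (1:ℤ)) 0) = (g ^ (n+1)) 0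
          rw [zpow_apply_zpow]] at this
      · have := (strictMono_zpow hg n).monotone ht2
        rwa [show (g ^ n) (0:ℝ) = X n from rfl] at this
    show c * ((g ^ (-(N ((g ^ n) t)))) ((g ^ n) t)) + -(N ((g ^ n) t) : ℝ) = z
    rw [hNn, zpow_apply_zpow, neg_add_cancel]
    have hg0 : ((g ^ (0:ℤ)) t : ℝ) = t := by simp
    have hct : c * t = s := by
      rw [ht]
      field_simp
    rw [hg0, hct, hs]
    push_cast
    ring
  -- equivariance
  have hφequi : ∀ y : ℝ, φ (g y) = φ y - 1 := by
    intro y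
    have hNg : N (g y) = N y + 1 := by
      apply hNuniq
      · have := hg (hN3 y)
        rwa [← hXsucc (N y + 1)] at this
      · have := hg.monotone (hN1 y)
        rwa [← hXsucc (N y)] at this
    show c * ((g ^ (-(N (g y)))) (g y)) + -(N (g y) : ℝ) = φ y - 1
    rw [hNg]
    have : (g ^ (-(N y + 1))) (g y) = (g ^ (-(N y))) y := by
      rw [show g y = (g ^ (1:ℤ)) y by simp, zpow_apply_zpow]
      ring_nf
    rw [this]
    show c * ((g ^ (-(N y))) y) + -((N y + 1 : ℤ) : ℝ) = (c * ((g ^ (-(N y))) y) + -(N y : ℝ)) - 1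
    push_cast
    ring
  -- PLM of φ
  have hφPLM : PLM φ := by
    intro y
    -- the pieces
    have hpiece : ∀ n : ℤ, PLM (fun w => c * ((g ^ (-n)) w) + -(n : ℝ)) := by
      intro n
      have h1 : InPL (affPerm c (-(n:ℝ)) (ne_of_gt hcpos) * g ^ (-n)) :=
        inPL_mul (inPL_affPerm _ _ _) (inPL_zpow hgPL _)
      have h2 : ⇑(affPerm c (-(n:ℝ)) (ne_of_gt hcpos) * g ^ (-n)) =
          fun w => c * ((g ^ (-n)) w) + -(n : ℝ) := rfl
      have := h1.2
      rwa [show {x : ℝ | ¬IsLocallyAffineAt (⇑(affPerm c (-(n:ℝ)) (ne_of_gt hcpos) * g ^ (-n))) x}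
        = NA (fun w => c * ((g ^ (-n)) w) + -(n : ℝ)) by rw [← h2]; rfl] at this
    have hval : ∀ (w : ℝ) (n : ℤ), X (n+1) < w → w ≤ X n →
        φ w = c * ((g ^ (-n)) w) + -(n : ℝ) := by
      intro w n h1 h2
      show c * ((g ^ (-(N w))) w) + -(N w : ℝ) = _
      rw [hNuniq w n h1 h2]
    rcases eq_or_lt_of_le (hN1 y) with heq | hlt
    · -- boundary point : y = X (N y)
      set n : ℤ := N y with hny
      have hb1 : X (n+1) < y := hN3 y
      have hb2 : y < X (n-1) := by
        have : y ≤ X n := hN1 y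
        have h3 : X n < X (n-1) := hXanti (by omega)
        linarith
      apply piece_two hb1 hb2 (h₁ := fun w => c * ((g ^ (-n)) w) + -(n : ℝ))
        (h₂ := fun w => c * ((g ^ (-(n-1))) w) + -((n-1 : ℤ) : ℝ))
      · intro w hw1 hw2
        exact hval w n hw1 (le_trans hw2.le (hN1 y))
      · intro w hw1 hw2
        refine hval w (n-1) ?_ hw2.le
        rw [show n - 1 + 1 = n by ring]
        calc X n = y := heq.symm ▸ rfl
        _ < w := hw1
      · exact hpiece n
      · exact hpiece (n-1)
    · -- interior point
      apply piece_one (U := Ioo (X (N y + 1)) (X (N y)))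
        (h := fun w => c * ((g ^ (-(N y))) w) + -(N y : ℝ)) isOpen_Ioo ⟨hN3 y, hlt⟩
      · intro w hw
        exact hval w (N y) hw.1 hw.2.le
      · exact hpiece (N y)
  -- assemble the permutation
  set Φiso : ℝ ≃o ℝ := StrictMono.orderIsoOfSurjective φ hφmono hφsurj with hΦiso
  set Φ : Equiv.Perm ℝ := Φiso.toEquiv with hΦ
  have hΦcoe : ⇑Φ = φ := rfl
  have hΦPL : InPL Φ := by
    refine ⟨⟨?_, ?_⟩, ?_⟩
    · exact Φiso.continuous
    · exact Φiso.symm.continuous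
    · intro x
      exact hφPLM x
  set ρ : Equiv.Perm ℝ := affPerm (-1) (-1) (by norm_num) with hρ
  set σ : Equiv.Perm ℝ := affPerm (-1) 0 (by norm_num) with hσ
  have hρPL : InPL ρ := inPL_affPerm _ _ _
  have hσPL : InPL σ := inPL_affPerm _ _ _
  have hρ2 : ρ * ρ = 1 := by
    apply Equiv.ext
    intro x
    show (-1) * ((-1) * x + (-1)) + (-1) = x
    ring
  have hσ2 : σ * σ = 1 := by
    apply Equiv.ext
    intro x
    show (-1) * ((-1) * x + 0) + 0 = x
    ring
  refine ⟨Φ⁻¹ * ρ * Φ, Φ⁻¹ * σ * Φ, ⟨?_, ?_⟩, ⟨?_, ?_⟩, ?_⟩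
  · exact inPL_mul (inPL_mul (inPL_inv hΦPL) hρPL) hΦPL
  · have h1 : (Φ⁻¹ * ρ * Φ) * (Φ⁻¹ * ρ * Φ) = Φ⁻¹ * (ρ * ρ) * Φ := by group
    rw [h1, hρ2]
    group
  · exact inPL_mul (inPL_mul (inPL_inv hΦPL) hσPL) hΦPL
  · have h1 : (Φ⁻¹ * σ * Φ) * (Φ⁻¹ * σ * Φ) = Φ⁻¹ * (σ * σ) * Φ := by group
    rw [h1, hσ2]
    group
  · have hProd : ρ * σ = Φ * g * Φ⁻¹ := by
      have h2 : Φ * g = (ρ * σ) * Φ := by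
        apply Equiv.ext
        intro y
        show Φ (g y) = ρ (σ (Φ y))
        have h1 := hφequi y
        show φ (g y) = ρ (σ (φ y))
        rw [h1]
        show φ y - 1 = (-1) * ((-1) * (φ y) + 0) + (-1)
        ring
      rw [h2]
      group
    have h3 : (Φ⁻¹ * ρ * Φ) * (Φ⁻¹ * σ * Φ) = Φ⁻¹ * (ρ * σ) * Φ := by group
    rw [h3, hProd]
    group

/-- every decreasing element of PL is a product of three PL involutions -/
lemma decomp_three (f : Equiv.Perm ℝ) (hf : InPL f) (hanti : StrictAnti ⇑f) :
    ∃ τ₁ τ₂ τ₃ : Equiv.Perm ℝ,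
      (InPL τ₁ ∧ τ₁ * τ₁ = 1) ∧ (InPL τ₂ ∧ τ₂ * τ₂ = 1) ∧
      (InPL τ₃ ∧ τ₃ * τ₃ = 1) ∧ f = τ₁ * τ₂ * τ₃ := by
  have hfinvPL : InPL f⁻¹ := inPL_inv hf
  have hfinvanti : StrictAnti ⇑f⁻¹ := strictAnti_symm hanti
  set d : Equiv.Perm ℝ := affPerm 1 (-1) one_ne_zero * f⁻¹ with hd
  have hdPL : InPL d := inPL_mul (inPL_affPerm _ _ _) hfinvPL
  have hdanti : StrictAnti ⇑d := by
    have : ⇑d = (fun y => 1 * y + (-1)) ∘ ⇑f⁻¹ := rfl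
    rw [this]
    exact StrictMono.comp_strictAnti (fun a b hab => by show 1 * a + (-1) < 1 * b + (-1); linarith) hfinvanti
  set τ₁ : Equiv.Perm ℝ := minPerm d hdanti with hτ₁
  have hτ₁PL : InPL τ₁ := minPerm_inPL d hdanti hdPL
  have hτ₁2 : τ₁ * τ₁ = 1 := minPerm_sq d hdanti
  have hτ₁anti : StrictAnti ⇑τ₁ := minPerm_strictAnti d hdanti
  set g : Equiv.Perm ℝ := τ₁ * f with hg
  have hgPL : InPL g := inPL_mul hτ₁PL hf
  have hgmono : StrictMono ⇑g := by
    have : ⇑g = ⇑τ₁ ∘ ⇑f := rfl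
    rw [this]
    exact hτ₁anti.comp hanti
  have hstep : ∀ x : ℝ, g x ≤ x - 1 := by
    intro x
    have h1 : g x = min (d (f x)) (d.symm (f x)) := rfl
    have h2 : d (f x) = f⁻¹ (f x) + (-1) := by
      show 1 * (f⁻¹ (f x)) + (-1) = _
      ring
    rw [h1, h2, show f⁻¹ (f x) = x from f.symm_apply_apply x]
    calc min (x + (-1)) (d.symm (f x)) ≤ x + (-1) := min_le_left _ _
    _ = x - 1 := by ring
  obtain ⟨τ₂, τ₃, hτ₂, hτ₃, hprod⟩ := decomp_fpf g hgPL hgmono hstep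
  refine ⟨τ₁, τ₂, τ₃, ⟨hτ₁PL, hτ₁2⟩, hτ₂, hτ₃, ?_⟩
  have h1 : τ₁ * (τ₁ * f) = f := by rw [← mul_assoc, hτ₁2, one_mul]
  conv_lhs => rw [← h1]
  rw [show τ₁ * f = g from rfl, hprod]
  group

theorem stmt_10' :
    (∀ f : Equiv.Perm ℝ, InPL f → StrictAnti (⇑f) →
      ∃ τ₁ τ₂ τ₃ : Equiv.Perm ℝ,
        (InPL τ₁ ∧ τ₁ * τ₁ = 1) ∧ (InPL τ₂ ∧ τ₂ * τ₂ = 1) ∧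
        (InPL τ₃ ∧ τ₃ * τ₃ = 1) ∧ f = τ₁ * τ₂ * τ₃) ∧
    (∀ f : Equiv.Perm ℝ, InPL f →
      ∃ τ₁ τ₂ τ₃ τ₄ : Equiv.Perm ℝ,
        (InPL τ₁ ∧ τ₁ * τ₁ = 1) ∧ (InPL τ₂ ∧ τ₂ * τ₂ = 1) ∧
        (InPL τ₃ ∧ τ₃ * τ₃ = 1) ∧ (InPL τ₄ ∧ τ₄ * τ₄ = 1) ∧
        f = τ₁ * τ₂ * τ₃ * τ₄) := by
  constructor
  · exact decomp_three
  · intro f hf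
    rcases Continuous.strictMono_of_inj hf.1.1 f.injective with hmono | hanti
    · set σ : Equiv.Perm ℝ := affPerm (-1) 0 (by norm_num) with hσ
      have hσPL : InPL σ := inPL_affPerm _ _ _
      have hσ2 : σ * σ = 1 := by
        apply Equiv.ext
        intro x
        show (-1) * ((-1) * x + 0) + 0 = x
        ring
      have hσanti : StrictAnti ⇑σ := by
        intro a b hab
        show (-1) * b + 0 < (-1) * a + 0
        linarith
      have hσfPL : InPL (σ * f) := inPL_mul hσPL hf
      have hσfanti : StrictAnti ⇑(σ * f) := by
        have : ⇑(σ * f) = ⇑σ ∘ ⇑f := rfl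
        rw [this]
        exact hσanti.comp_strictMono hmono
      obtain ⟨τ₁, τ₂, τ₃, h1, h2, h3, hprod⟩ := decomp_three (σ * f) hσfPL hσfanti
      refine ⟨σ, τ₁, τ₂, τ₃, ⟨hσPL, hσ2⟩, h1, h2, h3, ?_⟩
      have hcancel : σ * (σ * f) = f := by rw [← mul_assoc, hσ2, one_mul]
      conv_lhs => rw [← hcancel]
      rw [hprod]
      group
    · obtain ⟨τ₁, τ₂, τ₃, h1, h2, h3, hprod⟩ := decomp_three f hf hanti
      exact ⟨τ₁, τ₂, τ₃, 1, h1, h2, h3, ⟨inPL_one, one_mul 1⟩, by rw [mul_one]; exact hprod⟩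

/-- PL⁻(ℝ) ⊆ I₃(PL(ℝ)) and PL(ℝ) = I₄(PL(ℝ)). -/
theorem stmt_10 :
    (∀ f : Equiv.Perm ℝ, InPL f → StrictAnti (⇑f) →
      ∃ τ₁ τ₂ τ₃ : Equiv.Perm ℝ,
        (InPL τ₁ ∧ τ₁ * τ₁ = 1) ∧ (InPL τ₂ ∧ τ₂ * τ₂ = 1) ∧
        (InPL τ₃ ∧ τ₃ * τ₃ = 1) ∧ f = τ₁ * τ₂ * τ₃) ∧
    (∀ f : Equiv.Perm ℝ, InPL f →
      ∃ τ₁ τ₂ τ₃ τ₄ : Equiv.Perm ℝ,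
        (InPL τ₁ ∧ τ₁ * τ₁ = 1) ∧ (InPL τ₂ ∧ τ₂ * τ₂ = 1) ∧
        (InPL τ₃ ∧ τ₃ * τ₃ = 1) ∧ (InPL τ₄ ∧ τ₄ * τ₄ = 1) ∧
        f = τ₁ * τ₂ * τ₃ * τ₄) := stmt_10'
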